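/- Let G be an α-critical graph containing a triangle {u,v,w} where deg(u) = deg(v) = deg(w) = 3, and suppose the third neighbors u', v', w' of u, v, w (outside the triangle) are pairwise distinct. Then {u', v', w'} is a stable set in G. -/
import Mathlib


open SimpleGraph

variable {V : Type*}

/-- The maximum size of an independent (stable) set of a simple graph. -/
noncomputable def alpha (G : SimpleGraph V) : ℕ :=
  sSup {n | ∃ s : Finset V, (∀ x ∈ s, ∀ y ∈ s, ¬ G.Adj x y) ∧ s.card = n}

/-- A graph is α-critical if deleting any edge increases α. -/
def AlphaCritical (G : SimpleGraph V) : Prop :=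
  ∀ x y : V, G.Adj x y → alpha G < alpha (G.deleteEdges {s(x, y)})

/-- `G` contains a totally odd K₄-subdivision: four distinct branch vertices joined by
six internally disjoint paths of odd length. -/
def HasTOK4 (G : SimpleGraph V) : Prop :=
  ∃ b : Fin 4 → V, Function.Injective b ∧
  ∃ P : ∀ i j : Fin 4, G.Walk (b i) (b j),
    (∀ i j, i ≠ j → (P i j).IsPath) ∧
    (∀ i j, i ≠ j → Odd (P i j).length) ∧
    (∀ i j k l : Fin 4, i ≠ j → k ≠ l → s(i, j) ≠ s(k, l) →
      ∀ v : V, v ∈ (P i j).support → v ∈ (P k l).support →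
        (v = b i ∨ v = b j) ∧ (v = b k ∨ v = b l))

/-- `G` is (isomorphic to) a totally odd K₄-subdivision: it has one that uses all
vertices and all edges of `G`. -/
def IsTOK4 (G : SimpleGraph V) : Prop :=
  ∃ b : Fin 4 → V, Function.Injective b ∧
  ∃ P : ∀ i j : Fin 4, G.Walk (b i) (b j),
    (∀ i j, i ≠ j → (P i j).IsPath) ∧
    (∀ i j, i ≠ j → Odd (P i j).length) ∧
    (∀ i j k l : Fin 4, i ≠ j → k ≠ l → s(i, j) ≠ s(k, l) →
      ∀ v : V, v ∈ (P i j).support → v ∈ (P k l).support →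
        (v = b i ∨ v = b j) ∧ (v = b k ∨ v = b l)) ∧
    (∀ v : V, ∃ i j, i ≠ j ∧ v ∈ (P i j).support) ∧
    (∀ e ∈ G.edgeSet, ∃ i j, i ≠ j ∧ e ∈ (P i j).edges)

/-- `G` is an odd cycle: a cycle of odd length passing through all vertices
and using all edges of `G`. -/
def IsOddCycle (G : SimpleGraph V) : Prop :=
  ∃ (v : V) (w : G.Walk v v), w.IsCycle ∧ Odd w.length ∧
    (∀ u : V, u ∈ w.support) ∧ (∀ e ∈ G.edgeSet, e ∈ w.edges)

/-- `G` is isomorphic to the complete graph on one vertex. -/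
def IsK1 (G : SimpleGraph V) : Prop := Nonempty (G ≃g (⊤ : SimpleGraph (Fin 1)))

/-- `G` is isomorphic to the complete graph on two vertices. -/
def IsK2 (G : SimpleGraph V) : Prop := Nonempty (G ≃g (⊤ : SimpleGraph (Fin 2)))

section helpers

variable [Fintype V] [DecidableEq V] {G : SimpleGraph V}

lemma alpha_bdd (G : SimpleGraph V) :
    BddAbove {n | ∃ s : Finset V, (∀ x ∈ s, ∀ y ∈ s, ¬ G.Adj x y) ∧ s.card = n} := by
  refine ⟨Fintype.card V, ?_⟩
  rintro n ⟨s, -, rfl⟩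
  exact Finset.card_le_univ s

lemma indep_card_le {S : Finset V} (h : ∀ x ∈ S, ∀ y ∈ S, ¬ G.Adj x y) :
    S.card ≤ alpha G :=
  le_csSup (alpha_bdd G) ⟨S, h, rfl⟩

lemma exists_max_indep (G : SimpleGraph V) :
    ∃ S : Finset V, (∀ x ∈ S, ∀ y ∈ S, ¬ G.Adj x y) ∧ S.card = alpha G := by
  have : alpha G ∈ {n | ∃ s : Finset V, (∀ x ∈ s, ∀ y ∈ s, ¬ G.Adj x y) ∧ s.card = n} :=
    Nat.sSup_mem ⟨0, ∅, by simp, by simp⟩ (alpha_bdd G)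
  exact this

lemma nbr_mem {a b c a' y : V} (hab : G.Adj a b) (hac : G.Adj a c) (ha' : G.Adj a a')
    (hbc : b ≠ c) (hba' : b ≠ a') (hca' : c ≠ a')
    (hdeg : (G.neighborSet a).ncard = 3) (hy : G.Adj a y) :
    y = b ∨ y = c ∨ y = a' := by
  have hsub : ({b, c, a'} : Set V) ⊆ G.neighborSet a := by
    intro z hz
    rcases hz with rfl | rfl | rfl
    · exact hab
    · exact hac
    · exact ha'
  have h3 : ({b, c, a'} : Set V).ncard = 3 :=
    Set.ncard_eq_three.mpr ⟨b, c, a', hbc, hba', hca', rfl⟩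
  have heq : ({b, c, a'} : Set V) = G.neighborSet a :=
    Set.eq_of_subset_of_ncard_le hsub (by rw [h3, hdeg]) (Set.toFinite _)
  have : y ∈ ({b, c, a'} : Set V) := heq ▸ (hy : y ∈ G.neighborSet a)
  simpa using this

/-- One case of the swap argument. -/
lemma key_case {a b c a' c' : V} (hab : G.Adj a b) (hac : G.Adj a c) (ha' : G.Adj a a')
    (hbc : b ≠ c) (hba' : b ≠ a') (hca' : c ≠ a') (hac' : a ≠ c')
    (hdeg : (G.neighborSet a).ncard = 3)
    {S : Finset V}
    (hS : ∀ x ∈ S, ∀ y ∈ S, ¬ (G.deleteEdges {s(c, c')}).Adj x y)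
    (hcS : c ∈ S) (hbS : b ∉ S) (ha'S : a' ∉ S) :
    S.card ≤ alpha G := by
  have hGac : (G.deleteEdges {s(c, c')}).Adj a c := by
    rw [deleteEdges_adj]
    refine ⟨hac, ?_⟩
    simp only [Set.mem_singleton_iff, Sym2.eq_iff]
    rintro (⟨h1, h2⟩ | ⟨h1, h2⟩)
    · exact hac.ne h1
    · exact hac' h1
  have haS : a ∉ S := fun haS => hS a haS c hcS hGac
  -- the deleted-graph stable set restricted away from c is stable in G
  have hSG : ∀ x ∈ S.erase c, ∀ y ∈ S.erase c, ¬ G.Adj x y := by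
    intro x hx y hy hxy
    have hx' := Finset.mem_of_mem_erase hx
    have hy' := Finset.mem_of_mem_erase hy
    have := hS x hx' y hy'
    rw [deleteEdges_adj] at this
    have hmem : s(x, y) ∈ ({s(c, c')} : Set (Sym2 V)) := by
      by_contra hne
      exact this ⟨hxy, hne⟩
    simp only [Set.mem_singleton_iff, Sym2.eq_iff] at hmem
    rcases hmem with ⟨h1, h2⟩ | ⟨h1, h2⟩
    · exact Finset.ne_of_mem_erase hx h1
    · exact Finset.ne_of_mem_erase hy h2
  set S' : Finset V := insert a (S.erase c) with hS'
  have hind : ∀ x ∈ S', ∀ y ∈ S', ¬ G.Adj x y := by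
    intro x hx y hy hxy
    rw [hS', Finset.mem_insert] at hx hy
    rcases hx with rfl | hx
    · rcases hy with rfl | hy
      · exact hxy.ne rfl
      · rcases nbr_mem hab hac ha' hbc hba' hca' hdeg hxy with rfl | rfl | rfl
        · exact hbS (Finset.mem_of_mem_erase hy)
        · exact Finset.ne_of_mem_erase hy rfl
        · exact ha'S (Finset.mem_of_mem_erase hy)
    · rcases hy with rfl | hy
      · rcases nbr_mem hab hac ha' hbc hba' hca' hdeg hxy.symm with rfl | rfl | rfl
        · exact hbS (Finset.mem_of_mem_erase hx)
        · exact Finset.ne_of_mem_erase hx rfl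
        · exact ha'S (Finset.mem_of_mem_erase hx)
      · exact hSG x hx y hy hxy
  have hcard : S'.card = S.card := by
    rw [hS', Finset.card_insert_of_notMem (fun h => haS (Finset.mem_of_mem_erase h)),
      Finset.card_erase_of_mem hcS]
    exact Nat.succ_pred_eq_of_pos (Finset.card_pos.mpr ⟨c, hcS⟩)
  calc S.card = S'.card := hcard.symm
    _ ≤ alpha G := indep_card_le hind

/-- The main lemma: the two "third neighbors" of two triangle vertices of degree 3
are nonadjacent. -/
lemma key {a b c a' b' c' : V} (hG : AlphaCritical G)
    (hab : G.Adj a b) (hac : G.Adj a c) (hbc : G.Adj b c)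
    (hda : (G.neighborSet a).ncard = 3) (hdb : (G.neighborSet b).ncard = 3)
    (ha' : G.Adj a a') (ha'b : a' ≠ b) (ha'c : a' ≠ c)
    (hb' : G.Adj b b') (hb'a : b' ≠ a) (hb'c : b' ≠ c)
    (hc' : G.Adj c c') (hc'a : c' ≠ a) (hc'b : c' ≠ b)
    (ha'c' : a' ≠ c') (hb'c' : b' ≠ c') :
    ¬ G.Adj a' b' := by
  intro h
  obtain ⟨S, hS, hScard⟩ := exists_max_indep (G.deleteEdges {s(c, c')})
  have hlt : alpha G < S.card := hScard ▸ hG c c' hc'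
  -- both c and c' must be in S
  have hcc'S : c ∈ S ∧ c' ∈ S := by
    by_contra hcon
    have : ∀ x ∈ S, ∀ y ∈ S, ¬ G.Adj x y := by
      intro x hx y hy hxy
      have := hS x hx y hy
      rw [deleteEdges_adj] at this
      have hmem : s(x, y) ∈ ({s(c, c')} : Set (Sym2 V)) := by
        by_contra hne
        exact this ⟨hxy, hne⟩
      simp only [Set.mem_singleton_iff, Sym2.eq_iff] at hmem
      rcases hmem with ⟨h1, h2⟩ | ⟨h1, h2⟩
      · exact hcon ⟨h1 ▸ hx, h2 ▸ hy⟩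
      · exact hcon ⟨h2 ▸ hy, h1 ▸ hx⟩
    exact absurd (indep_card_le this) (not_le.mpr hlt)
  -- a' and b' cannot both be in S
  have h'S : a' ∉ S ∨ b' ∉ S := by
    by_contra hcon
    push_neg at hcon
    refine hS a' hcon.1 b' hcon.2 ?_
    rw [deleteEdges_adj]
    refine ⟨h, ?_⟩
    simp only [Set.mem_singleton_iff, Sym2.eq_iff]
    rintro (⟨h1, h2⟩ | ⟨h1, h2⟩)
    · exact ha'c h1
    · exact hb'c h2
  -- b ∉ S and a ∉ S (adjacent to c in the deleted graph)
  have hbS : b ∉ S := by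
    intro hbS
    refine hS b hbS c hcc'S.1 ?_
    rw [deleteEdges_adj]
    refine ⟨hbc, ?_⟩
    simp only [Set.mem_singleton_iff, Sym2.eq_iff]
    rintro (⟨h1, h2⟩ | ⟨h1, h2⟩)
    · exact hbc.ne h1
    · exact hc'b h1.symm
  have haS : a ∉ S := by
    intro haS
    refine hS a haS c hcc'S.1 ?_
    rw [deleteEdges_adj]
    refine ⟨hac, ?_⟩
    simp only [Set.mem_singleton_iff, Sym2.eq_iff]
    rintro (⟨h1, h2⟩ | ⟨h1, h2⟩)
    · exact hac.ne h1
    · exact hc'a h1.symm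
  rcases h'S with ha'S | hb'S
  · exact absurd (key_case hab hac ha' hbc.ne (fun e => ha'b e.symm)
      (fun e => ha'c e.symm) (fun e => hc'a e.symm) hda hS hcc'S.1 hbS ha'S) (not_le.mpr hlt)
  · exact absurd (key_case hab.symm hbc hb' hac.ne (fun e => hb'a e.symm)
      (fun e => hb'c e.symm) (fun e => hc'b e.symm) hdb hS hcc'S.1 haS hb'S) (not_le.mpr hlt)

end helpers

theorem stmt_18 {V : Type*} [Fintype V] (G : SimpleGraph V) (hG : AlphaCritical G)
    (u v w u' v' w' : V)
    (huv : G.Adj u v) (huw : G.Adj u w) (hvw : G.Adj v w)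
    (hdu : (G.neighborSet u).ncard = 3) (hdv : (G.neighborSet v).ncard = 3)
    (hdw : (G.neighborSet w).ncard = 3)
    (hu' : G.Adj u u') (hu'T : u' ≠ v ∧ u' ≠ w)
    (hv' : G.Adj v v') (hv'T : v' ≠ u ∧ v' ≠ w)
    (hw' : G.Adj w w') (hw'T : w' ≠ u ∧ w' ≠ v)
    (hdist : u' ≠ v' ∧ u' ≠ w' ∧ v' ≠ w') :
    ¬ G.Adj u' v' ∧ ¬ G.Adj u' w' ∧ ¬ G.Adj v' w' := by
  classical
  obtain ⟨huv', huw', hvw'⟩ := hdist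
  refine ⟨?_, ?_, ?_⟩
  · exact key hG huv huw hvw hdu hdv hu' hu'T.1 hu'T.2 hv' hv'T.1 hv'T.2
      hw' hw'T.1 hw'T.2 huw' hvw'
  · exact key hG huw huv hvw.symm hdu hdw hu' hu'T.2 hu'T.1 hw' hw'T.1 hw'T.2
      hv' hv'T.1 hv'T.2 huv' (fun e => hvw' e.symm)
  · exact key hG hvw huv.symm huw.symm hdv hdw hv' hv'T.2 hv'T.1 hw' hw'T.2 hw'T.1
      hu' hu'T.1 hu'T.2 (fun e => huv' e.symm) (fun e => huw' e.symm)
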